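/- Let A ∈ M_m(ℂ) and B ∈ M_n(ℂ) be nonzero matrices such that the Kronecker product A ⊗ B is unitary. Then there exists a real scalar δ > 0 such that δ·A and δ⁻¹·B are both unitary. -/
import Mathlib

open Kronecker Matrix

theorem kronecker_unitary_factors {m n : ℕ}
    (A : Matrix (Fin m) (Fin m) ℂ) (B : Matrix (Fin n) (Fin n) ℂ)
    (hA : A ≠ 0) (hB : B ≠ 0)
    (hU : A ⊗ₖ B ∈ Matrix.unitaryGroup (Fin m × Fin n) ℂ) :
    ∃ δ : ℝ, 0 < δ ∧ (δ : ℂ) • A ∈ Matrix.unitaryGroup (Fin m) ℂ ∧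
      ((δ : ℂ))⁻¹ • B ∈ Matrix.unitaryGroup (Fin n) ℂ := by
  have hU' : star (A ⊗ₖ B) * (A ⊗ₖ B) = 1 := Matrix.mem_unitaryGroup_iff'.mp hU
  set P : Matrix (Fin m) (Fin m) ℂ := Aᴴ * A with hPdef
  set Q : Matrix (Fin n) (Fin n) ℂ := Bᴴ * B with hQdef
  have key : ∀ i i' j j', P i i' * Q j j' =
      if i = i' ∧ j = j' then (1:ℂ) else 0 := by
    intro i i' j j'
    have h := congrFun (congrFun hU' (i, j)) (i', j')
    simp only [Matrix.mul_apply, Matrix.star_apply, Matrix.kroneckerMap_apply,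
      Matrix.one_apply, Prod.mk.injEq, Prod.ext_iff] at h
    rw [Fintype.sum_prod_type] at h
    have hL : ∀ k : Fin m, ∀ l : Fin n,
        star (A k i * B l j) * (A k i' * B l j') =
        (star (A k i) * A k i') * (star (B l j) * B l j') := by
      intro k l; push_cast [star_mul']; ring
    simp only [hL] at h
    rw [← Finset.sum_mul_sum] at h
    rw [hPdef, hQdef, Matrix.mul_apply, Matrix.mul_apply]
    simp only [Matrix.conjTranspose_apply]
    convert h using 2
  -- diagonal entries are casts of sums of normSq
  have hPdiag : ∀ i, P i i = ((∑ k, Complex.normSq (A k i) : ℝ) : ℂ) := by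
    intro i
    rw [hPdef, Matrix.mul_apply]
    push_cast
    refine Finset.sum_congr rfl fun k _ => ?_
    rw [Matrix.conjTranspose_apply, Complex.normSq_eq_conj_mul_self, Complex.star_def]
  have hQdiag : ∀ j, Q j j = ((∑ l, Complex.normSq (B l j) : ℝ) : ℂ) := by
    intro j
    rw [hQdef, Matrix.mul_apply]
    push_cast
    refine Finset.sum_congr rfl fun l _ => ?_
    rw [Matrix.conjTranspose_apply, Complex.normSq_eq_conj_mul_self, Complex.star_def]
  -- find nonzero columns
  obtain ⟨l0, j0, hBl⟩ : ∃ l j, B l j ≠ 0 := by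
    by_contra hc
    push_neg at hc
    exact hB (by ext l j; simpa using hc l j)
  obtain ⟨k0, i0, hAk⟩ : ∃ k i, A k i ≠ 0 := by
    by_contra hc
    push_neg at hc
    exact hA (by ext k i; simpa using hc k i)
  set r : ℝ := ∑ l, Complex.normSq (B l j0) with hrdef
  have hr : 0 < r := by
    refine Finset.sum_pos' (fun l _ => Complex.normSq_nonneg _) ⟨l0, Finset.mem_univ _, ?_⟩
    simpa using Complex.normSq_pos.mpr hBl
  have hrC : (r : ℂ) ≠ 0 := by exact_mod_cast hr.ne'
  have hQr : Q j0 j0 = (r : ℂ) := hQdiag j0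
  have hPval : ∀ i i', P i i' = if i = i' then (r : ℂ)⁻¹ else 0 := by
    intro i i'
    have h := key i i' j0 j0
    rw [hQr] at h
    simp only [and_true] at h
    split_ifs at h ⊢ with hii
    · exact eq_inv_of_mul_eq_one_left h
    · exact (mul_eq_zero.mp h).resolve_right hrC
  set s : ℝ := ∑ k, Complex.normSq (A k i0) with hsdef
  have hs : 0 < s := by
    refine Finset.sum_pos' (fun k _ => Complex.normSq_nonneg _) ⟨k0, Finset.mem_univ _, ?_⟩
    simpa using Complex.normSq_pos.mpr hAk
  have hPs : P i0 i0 = (s : ℂ) := hPdiag i0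
  have hP0 : P i0 i0 ≠ 0 := by rw [hPs]; exact_mod_cast hs.ne'
  have hPinv : P i0 i0 = (r : ℂ)⁻¹ := by rw [hPval]; simp
  have hQval : ∀ j j', Q j j' = if j = j' then (r : ℂ) else 0 := by
    intro j j'
    have h := key i0 i0 j j'
    rw [hPinv] at h
    simp only [true_and] at h
    have := congrArg (fun z => (r : ℂ) * z) h
    simp only [← mul_assoc, mul_inv_cancel₀ hrC, one_mul] at this
    rw [this]
    split_ifs <;> simp
  refine ⟨Real.sqrt r, Real.sqrt_pos.mpr hr, ?_, ?_⟩
  · rw [Matrix.mem_unitaryGroup_iff']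
    have : star ((Real.sqrt r : ℂ) • A) * ((Real.sqrt r : ℂ) • A)
        = ((Real.sqrt r : ℂ) * (Real.sqrt r : ℂ)) • P := by
      rw [star_smul, Matrix.smul_mul, Matrix.mul_smul, smul_smul, hPdef]
      simp [Complex.star_def, Complex.conj_ofReal, Matrix.star_eq_conjTranspose]
    rw [this]
    ext i i'
    simp only [Matrix.smul_apply, hPval, Matrix.one_apply, smul_eq_mul]
    split_ifs
    · rw [← Complex.ofReal_mul, Real.mul_self_sqrt hr.le]
      field_simp
    · simp
  · rw [Matrix.mem_unitaryGroup_iff']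
    have : star (((Real.sqrt r : ℂ))⁻¹ • B) * (((Real.sqrt r : ℂ))⁻¹ • B)
        = (((Real.sqrt r : ℂ))⁻¹ * ((Real.sqrt r : ℂ))⁻¹) • Q := by
      rw [star_smul, Matrix.smul_mul, Matrix.mul_smul, smul_smul, hQdef]
      simp [Complex.star_def, Complex.conj_ofReal, Matrix.star_eq_conjTranspose]
    rw [this]
    ext j j'
    simp only [Matrix.smul_apply, hQval, Matrix.one_apply, smul_eq_mul]
    split_ifs
    · rw [← mul_inv, ← Complex.ofReal_mul, Real.mul_self_sqrt hr.le]
      field_simp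
    · simp
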